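/- The cyclic derivative with respect to x of the free necklace polynomial N_{j+1,k} equals the sum of all monomials in the free algebra C<x,y> with exactly j occurrences of x and k occurrences of y. Similarly, the cyclic derivative with respect to y of N_{j,k+1} equals the same sum. -/

import Mathlib

noncomputable section

/-- Rotation of a necklace by `c`. -/
def rotBy {n : ℕ} (c : Fin n) (f : Fin n → Bool) : Fin n → Bool := fun i => f (i + c)

/-- Two necklaces are related iff one is a rotation of the other. -/
def rotRel (n : ℕ) (f g : Fin n → Bool) : Prop := ∃ c : Fin n, g = rotBy c f

/-- Necklaces with `n` beads, `j` of them shaded (reading `x`). -/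
def Neck (n j : ℕ) : Finset (Fin n → Bool) :=
  Finset.univ.filter fun f => (Finset.univ.filter fun i => f i = true).card = j

/-- A choice of representative of the rotation orbit of `f`; it is constant on orbits. -/
def neckRep {n : ℕ} (f : Fin n → Bool) : Fin n → Bool :=
  (Quot.mk (rotRel n) f).out

/-- The word (`true = x`, `false = y`) read off a necklace. -/
def wordOf {n : ℕ} (f : Fin n → Bool) : FreeMonoid Bool := FreeMonoid.ofList (List.ofFn f)

/-- The free necklace polynomial `N_{j,k}`. -/
def NeckPoly (j k : ℕ) : MonoidAlgebra ℂ (FreeMonoid Bool) :=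
  (((j + k : ℕ) : ℂ))⁻¹ •
    ∑ f ∈ Neck (j + k) j, MonoidAlgebra.single (wordOf (neckRep f)) 1

/-- `M_{j,k}`: the sum of all monomials with `j` occurrences of `x` and `k` of `y`. -/
def Mono (j k : ℕ) : MonoidAlgebra ℂ (FreeMonoid Bool) :=
  ∑ f ∈ Neck (j + k) j, MonoidAlgebra.single (wordOf f) 1

/-- The cyclic derivative `δ_b` of a single word: sum, over all cyclic rotations of the
word beginning with the letter `b`, of the rotated word with that leading `b` deleted. -/
def cycDerivWord (b : Bool) (w : List Bool) : MonoidAlgebra ℂ (FreeMonoid Bool) :=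
  ∑ l ∈ Finset.range w.length,
    if (w.rotate l).head? = some b then
      MonoidAlgebra.single (FreeMonoid.ofList (w.rotate l).tail) 1
    else 0

/-- The cyclic derivative `δ_b`, extended linearly. -/
def cycDeriv (b : Bool) (p : MonoidAlgebra ℂ (FreeMonoid Bool)) :
    MonoidAlgebra ℂ (FreeMonoid Bool) :=
  p.coeff.sum fun w c => c • cycDerivWord b (FreeMonoid.toList w)

-- basics on rotBy
lemma rotBy_rotBy {n : ℕ} (c d : Fin n) (f : Fin n → Bool) :
    rotBy c (rotBy d f) = rotBy (c + d) f := by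
  funext i; simp [rotBy, add_assoc]

lemma rotBy_zero {n : ℕ} [NeZero n] (f : Fin n → Bool) : rotBy 0 f = f := by
  funext i; simp [rotBy]

lemma rotRel_equiv (n : ℕ) [NeZero n] : Equivalence (rotRel n) := by
  constructor
  · intro f; exact ⟨0, (rotBy_zero f).symm⟩
  · rintro f g ⟨c, rfl⟩; exact ⟨-c, by rw [rotBy_rotBy, neg_add_cancel, rotBy_zero]⟩
  · rintro f g h ⟨c, rfl⟩ ⟨d, rfl⟩; exact ⟨d + c, rotBy_rotBy d c f⟩

lemma neckRep_spec {n : ℕ} [NeZero n] (f : Fin n → Bool) : ∃ c, neckRep f = rotBy c f := by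
  have h : Quot.mk (rotRel n) (neckRep f) = Quot.mk (rotRel n) f := Quot.out_eq _
  have := Quot.eq.mp h
  have h2 : rotRel n (neckRep f) f := ((rotRel_equiv n).eqvGen_iff).mp this
  obtain ⟨c, hc⟩ := h2
  refine ⟨-c, ?_⟩
  conv_rhs => rw [hc]
  rw [rotBy_rotBy, neg_add_cancel, rotBy_zero]

lemma ofFn_rotBy {n : ℕ} (c : Fin n) (f : Fin n → Bool) :
    List.ofFn (rotBy c f) = (List.ofFn f).rotate c.val := by
  apply List.ext_get
  · simp
  · intro i h1 h2
    rw [List.get_ofFn, List.get_rotate]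
    simp only [List.get_ofFn, rotBy]
    apply congrArg
    apply Fin.ext
    simp [Fin.add_def]

lemma mem_neck_iff {n m : ℕ} (f : Fin n → Bool) :
    f ∈ Neck n m ↔ (Finset.univ.filter fun i => f i = true).card = m := by
  simp [Neck]

lemma rotBy_mem_neck {n m : ℕ} [NeZero n] (c : Fin n) (f : Fin n → Bool) (hf : f ∈ Neck n m) :
    rotBy c f ∈ Neck n m := by
  rw [mem_neck_iff] at *
  rw [← hf]
  rw [Finset.card_filter, Finset.card_filter]
  exact Fintype.sum_equiv (Equiv.addRight c) _ _ (fun i => rfl)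

-- linearity of cycDeriv
lemma cycDeriv_zero (b : Bool) : cycDeriv b 0 = 0 := by
  unfold cycDeriv; rw [MonoidAlgebra.coeff_zero]; exact Finsupp.sum_zero_index

lemma cycDeriv_add (b : Bool) (p q : MonoidAlgebra ℂ (FreeMonoid Bool)) :
    cycDeriv b (p + q) = cycDeriv b p + cycDeriv b q := by
  unfold cycDeriv; rw [MonoidAlgebra.coeff_add]; exact Finsupp.sum_add_index' (fun w => zero_smul ℂ _) (fun w c₁ c₂ => add_smul c₁ c₂ _)

lemma cycDeriv_sum {ι : Type*} (b : Bool) (s : Finset ι)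
    (g : ι → MonoidAlgebra ℂ (FreeMonoid Bool)) :
    cycDeriv b (∑ i ∈ s, g i) = ∑ i ∈ s, cycDeriv b (g i) := by
  classical
  induction s using Finset.cons_induction with
  | empty => simp [cycDeriv_zero]
  | cons a s ha ih => rw [Finset.sum_cons, cycDeriv_add, ih, Finset.sum_cons]

lemma cycDeriv_single (b : Bool) (w : FreeMonoid Bool) (c : ℂ) :
    cycDeriv b (MonoidAlgebra.single w c) = c • cycDerivWord b (FreeMonoid.toList w) := by
  unfold cycDeriv; rw [MonoidAlgebra.coeff_single]
  apply Finsupp.sum_single_index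
  exact zero_smul ℂ _

-- cycDerivWord of ofFn, as a sum over Fin
lemma cycDerivWord_ofFn {N : ℕ} (b : Bool) (f : Fin (N + 1) → Bool) :
    cycDerivWord b (List.ofFn f) =
      ∑ c : Fin (N + 1), if f c = b then
        MonoidAlgebra.single (FreeMonoid.ofList (List.ofFn (rotBy c f)).tail) 1 else 0 := by
  unfold cycDerivWord
  rw [List.length_ofFn, ← Fin.sum_univ_eq_sum_range]
  apply Finset.sum_congr rfl
  intro c _
  rw [← ofFn_rotBy]
  have hh : (List.ofFn (rotBy c f)).head? = some (rotBy c f 0) := by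
    rw [List.ofFn_succ]; rfl
  rw [hh]
  simp [rotBy]

-- invariance under rotation
lemma cycDerivWord_rotBy {N : ℕ} (b : Bool) (d : Fin (N + 1)) (f : Fin (N + 1) → Bool) :
    cycDerivWord b (List.ofFn (rotBy d f)) = cycDerivWord b (List.ofFn f) := by
  rw [cycDerivWord_ofFn, cycDerivWord_ofFn]
  apply Fintype.sum_equiv (Equiv.addRight d)
  intro c
  simp only [Equiv.coe_addRight]
  rw [rotBy_rotBy]
  congr 1

lemma sum_cycDerivWord (b : Bool) (N m : ℕ) :
    ∑ f ∈ Neck (N + 1) m, cycDerivWord b (List.ofFn f)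
      = (N + 1) • ∑ h ∈ (Neck (N + 1) m).filter (fun h => h 0 = b),
          MonoidAlgebra.single (FreeMonoid.ofList (List.ofFn h).tail) 1 := by
  simp only [cycDerivWord_ofFn]
  rw [Finset.sum_comm]
  have step : ∀ c : Fin (N + 1),
      (∑ f ∈ Neck (N + 1) m, if f c = b then
        MonoidAlgebra.single (FreeMonoid.ofList (List.ofFn (rotBy c f)).tail) (1 : ℂ) else 0)
      = ∑ g ∈ Neck (N + 1) m, if g 0 = b then
        MonoidAlgebra.single (FreeMonoid.ofList (List.ofFn g).tail) (1 : ℂ) else 0 := by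
    intro c
    refine Finset.sum_nbij' (fun f => rotBy c f) (fun g => rotBy (-c) g) ?_ ?_ ?_ ?_ ?_
    · intro f hf; exact rotBy_mem_neck c f hf
    · intro g hg; exact rotBy_mem_neck (-c) g hg
    · intro f _; show rotBy (-c) (rotBy c f) = f
      rw [rotBy_rotBy, neg_add_cancel, rotBy_zero]
    · intro g _; show rotBy c (rotBy (-c) g) = g
      rw [rotBy_rotBy, add_neg_cancel, rotBy_zero]
    · intro f _
      show _ = if rotBy c f 0 = b then
        MonoidAlgebra.single (FreeMonoid.ofList (List.ofFn (rotBy c f)).tail) (1 : ℂ) else 0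
      have h0 : rotBy c f 0 = f c := by simp [rotBy]
      rw [h0]
  refine Eq.trans (Finset.sum_congr rfl fun c _ => step c) ?_
  rw [Finset.sum_const, Finset.card_univ, Fintype.card_fin]
  congr 1
  rw [Finset.sum_filter]

lemma key (b : Bool) (N m : ℕ) :
    cycDeriv b ((((N + 1 : ℕ)) : ℂ)⁻¹ •
        ∑ f ∈ Neck (N + 1) m, MonoidAlgebra.single (wordOf (neckRep f)) 1)
      = ∑ h ∈ (Neck (N + 1) m).filter (fun h => h 0 = b),
          MonoidAlgebra.single (FreeMonoid.ofList (List.ofFn h).tail) 1 := by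
  rw [Finset.smul_sum]
  simp only [MonoidAlgebra.smul_single', mul_one]
  rw [cycDeriv_sum]
  simp only [cycDeriv_single]
  have hw : ∀ f : Fin (N + 1) → Bool,
      cycDerivWord b (FreeMonoid.toList (wordOf (neckRep f))) = cycDerivWord b (List.ofFn f) := by
    intro f
    obtain ⟨c, hc⟩ := neckRep_spec f
    rw [wordOf, FreeMonoid.toList_ofList, hc, cycDerivWord_rotBy]
  simp only [hw]
  rw [← Finset.smul_sum, sum_cycDerivWord]
  rw [← Nat.cast_smul_eq_nsmul ℂ, smul_smul, inv_mul_cancel₀, one_smul]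
  exact_mod_cast Nat.succ_ne_zero N

lemma count_split {N : ℕ} (h : Fin (N + 1) → Bool) :
    (Finset.univ.filter fun i => h i = true).card
      = (if h 0 = true then 1 else 0)
        + (Finset.univ.filter fun i => Fin.tail h i = true).card := by
  rw [Finset.card_filter, Finset.card_filter, Fin.sum_univ_succ]
  rfl

lemma filter_tail_sum (b : Bool) (N m m' : ℕ) (hm : (m' + if b then 1 else 0) = m) :
    ∑ h ∈ (Neck (N + 1) m).filter (fun h => h 0 = b),
        MonoidAlgebra.single (FreeMonoid.ofList (List.ofFn h).tail) (1 : ℂ)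
      = ∑ g ∈ Neck N m', MonoidAlgebra.single (wordOf g) (1 : ℂ) := by
  refine Finset.sum_nbij' (fun h => Fin.tail h) (fun g => Fin.cons b g) ?_ ?_ ?_ ?_ ?_
  · intro h hh
    rw [Finset.mem_filter] at hh
    obtain ⟨h1, h2⟩ := hh
    rw [mem_neck_iff] at h1 ⊢
    show (Finset.univ.filter fun i => Fin.tail h i = true).card = m'
    have hs := count_split h
    rw [h2] at hs
    cases b <;> simp at hs hm <;> omega
  · intro g hg
    rw [mem_neck_iff] at hg
    rw [Finset.mem_filter, mem_neck_iff]
    refine ⟨?_, Fin.cons_zero (α := fun _ => Bool) b g⟩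
    have hs := count_split (Fin.cons b g)
    simp only [Fin.tail_cons, Fin.cons_zero] at hs
    rw [hs, hg]
    cases b <;> simp at hm ⊢ <;> omega
  · intro h hh
    rw [Finset.mem_filter] at hh
    show Fin.cons b (Fin.tail h) = h
    rw [← hh.2]
    exact Fin.cons_self_tail h
  · intro g _
    exact Fin.tail_cons (α := fun _ => Bool) b g
  · intro h _
    congr 1
    show FreeMonoid.ofList (List.ofFn h).tail = FreeMonoid.ofList (List.ofFn (Fin.tail h))
    rw [List.ofFn_succ]
    rfl


/-- `δ_x N_{j+1,k} = M_{j,k}` and `δ_y N_{j,k+1} = M_{j,k}`. -/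
theorem stmt3 (j k : ℕ) :
    cycDeriv true (NeckPoly (j + 1) k) = Mono j k ∧
    cycDeriv false (NeckPoly j (k + 1)) = Mono j k := by
  constructor
  · unfold NeckPoly Mono
    rw [show j + 1 + k = (j + k) + 1 from by omega]
    rw [key true (j + k) (j + 1)]
    exact filter_tail_sum true (j + k) (j + 1) j (by simp)
  · unfold NeckPoly Mono
    rw [show j + (k + 1) = (j + k) + 1 from by omega]
    rw [key false (j + k) j]
    exact filter_tail_sum false (j + k) j j (by simp)
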